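/- arXiv:1201.0308 — 3 statements merged into one kernel-verified Lean document; each statement's English description precedes it below -/
import Mathlib

section
/- Let D_g ∈ ℝ⟦z⟧ for g ≥ 0 with D_0 invertible (nonzero constant term), and define D*_g recursively by D*_0 := 1 − D_0⁻¹ and, for g ≥ 1, D*_g := −D_0⁻¹ · ((D*_0 − 1)·D_g + Σ_{g₁=1}^{g−1} D*_{g₁}·D_{g−g₁}). Then for every g ≥ 1, D*_g = D_g·D_0⁻² + Σ_{j=0}^{g−2} (−1)^{g+1−j} · D_0^{−(g+1−j)} · ( Σ_{σ} Π_{i=1}^{g−j} D_{σ_i} ), where the inner sum runs over all compositions σ = (σ_1, …, σ_{g−j}) of g into exactly g−j positive parts. -/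
/-- The set of compositions of `g` into exactly `k` positive parts, encoded as
functions `Fin k → ℕ` with all parts in `[1, g]` summing to `g`. -/
def comps (g k : ℕ) : Finset (Fin k → ℕ) :=
  (Fintype.piFinset fun _ : Fin k => Finset.Icc 1 g).filter fun σ => ∑ i, σ i = g

lemma mem_comps {g k : ℕ} {σ : Fin k → ℕ} :
    σ ∈ comps g k ↔ (∀ i, 1 ≤ σ i) ∧ ∑ i, σ i = g := by
  simp only [comps, Finset.mem_filter, Fintype.mem_piFinset, Finset.mem_Icc]
  constructor
  · rintro ⟨h1, h2⟩; exact ⟨fun i => (h1 i).1, h2⟩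
  · rintro ⟨h1, h2⟩
    refine ⟨fun i => ⟨h1 i, ?_⟩, h2⟩
    calc σ i ≤ ∑ j, σ j := Finset.single_le_sum (fun j _ => Nat.zero_le _) (Finset.mem_univ i)
    _ = g := h2

lemma comps_eq_empty {g k : ℕ} (h : g < k) : comps g k = ∅ := by
  ext σ
  simp only [mem_comps, Finset.notMem_empty, iff_false, not_and]
  intro h1 h2
  have : k ≤ ∑ i, σ i := by
    calc (k : ℕ) = ∑ _i : Fin k, 1 := by simp
    _ ≤ ∑ i, σ i := Finset.sum_le_sum fun i _ => h1 i
  omega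

lemma comps_one {g : ℕ} (hg : 1 ≤ g) : comps g 1 = {fun _ => g} := by
  ext σ
  simp only [mem_comps, Finset.mem_singleton, Fin.sum_univ_one]
  constructor
  · rintro ⟨h1, h2⟩; funext i; have : i = 0 := Subsingleton.elim _ _; rw [this, h2]
  · rintro rfl; exact ⟨fun i => hg, rfl⟩

lemma S_rec (D : ℕ → PowerSeries ℝ) (g k : ℕ) (hk : 1 ≤ k) :
    ∑ σ ∈ comps g (k+1), ∏ i, D (σ i)
      = ∑ g₁ ∈ Finset.Icc 1 (g-1), (∑ τ ∈ comps g₁ k, ∏ i, D (τ i)) * D (g - g₁) := by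
  have hR : ∀ g₁ : ℕ, (∑ τ ∈ comps g₁ k, ∏ i, D (τ i)) * D (g - g₁)
      = ∑ τ ∈ comps g₁ k, (∏ i, D (τ i)) * D (g - g₁) := fun g₁ => Finset.sum_mul _ _ _
  simp only [hR]
  have hsig := Finset.sum_sigma (Finset.Icc 1 (g-1)) (fun g₁ => comps g₁ k)
    (fun p : Σ _g₁ : ℕ, Fin k → ℕ => (∏ i, D (p.2 i)) * D (g - p.1))
  rw [← hsig]
  refine Finset.sum_nbij' (i := fun σ => (⟨∑ i : Fin k, σ i.castSucc, fun i => σ i.castSucc⟩ :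
      Σ _g₁ : ℕ, Fin k → ℕ))
    (j := fun p => Fin.snoc p.2 (g - p.1)) ?_ ?_ ?_ ?_ ?_
  · intro σ hσ
    rw [mem_comps] at hσ
    obtain ⟨h1, h2⟩ := hσ
    rw [Fin.sum_univ_castSucc] at h2
    have hk' : k ≤ ∑ i : Fin k, σ i.castSucc := by
      calc (k : ℕ) = ∑ _i : Fin k, 1 := by simp
      _ ≤ _ := Finset.sum_le_sum fun i _ => h1 _
    have hlast : 1 ≤ σ (Fin.last k) := h1 _
    simp only [Finset.mem_sigma, Finset.mem_Icc, mem_comps]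
    exact ⟨⟨by omega, by omega⟩, fun i => h1 _, trivial⟩
  · intro p hp
    simp only [Finset.mem_sigma, Finset.mem_Icc, mem_comps] at hp
    obtain ⟨⟨hg1, hg2⟩, h1, h2⟩ := hp
    rw [mem_comps]
    constructor
    · intro i
      refine Fin.lastCases ?_ ?_ i
      · simp only [Fin.snoc_last]; omega
      · intro j; simp only [Fin.snoc_castSucc]; exact h1 j
    · rw [Fin.sum_univ_castSucc]
      simp only [Fin.snoc_castSucc, Fin.snoc_last, h2]
      omega
  · intro σ hσ
    rw [mem_comps] at hσ
    obtain ⟨h1, h2⟩ := hσ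
    rw [Fin.sum_univ_castSucc] at h2
    funext i
    refine Fin.lastCases ?_ ?_ i
    · simp only [Fin.snoc_last]; have := h1 (Fin.last k); omega
    · intro j; simp only [Fin.snoc_castSucc]
  · intro p hp
    simp only [Finset.mem_sigma, Finset.mem_Icc, mem_comps] at hp
    obtain ⟨⟨hg1, hg2⟩, h1, h2⟩ := hp
    refine Sigma.ext ?_ ?_
    · simp only [Fin.snoc_castSucc, h2]
    · simp only [Fin.snoc_castSucc]
      exact heq_of_eq rfl
  · intro σ hσ
    rw [mem_comps] at hσ
    obtain ⟨h1, h2⟩ := hσ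
    rw [Fin.sum_univ_castSucc] at h2
    rw [Fin.prod_univ_castSucc]
    have hl : σ (Fin.last k) = g - ∑ i : Fin k, σ i.castSucc := by omega
    rw [hl]

noncomputable def Scomp (D : ℕ → PowerSeries ℝ) (g k : ℕ) : PowerSeries ℝ :=
  ∑ σ ∈ comps g k, ∏ i, D (σ i)

lemma Scomp_rec (D : ℕ → PowerSeries ℝ) (g k : ℕ) (hk : 1 ≤ k) :
    Scomp D g (k+1) = ∑ g₁ ∈ Finset.Icc 1 (g-1), Scomp D g₁ k * D (g - g₁) :=
  S_rec D g k hk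

lemma Scomp_one (D : ℕ → PowerSeries ℝ) {g : ℕ} (hg : 1 ≤ g) : Scomp D g 1 = D g := by
  simp only [Scomp, comps_one hg, Finset.sum_singleton, Fin.prod_univ_one]

lemma Scomp_zero (D : ℕ → PowerSeries ℝ) {g k : ℕ} (h : g < k) : Scomp D g k = 0 := by
  simp only [Scomp, comps_eq_empty h, Finset.sum_empty]

/-- The Claim (eq. E:irr_exp): the closed composition-sum formula for the
irreducible-structure generating functions `D*_g` defined by the recursion of
Lemma irr_rec. -/
theorem stmt_1 (D : ℕ → PowerSeries ℝ)
    (hD0 : PowerSeries.constantCoeff (D 0) ≠ 0)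
    (Dstar : ℕ → PowerSeries ℝ)
    (hDs0 : Dstar 0 = 1 - (D 0)⁻¹)
    (hDsg : ∀ g, 1 ≤ g →
      Dstar g = -(D 0)⁻¹ * ((Dstar 0 - 1) * D g +
        ∑ g₁ ∈ Finset.Icc 1 (g - 1), Dstar g₁ * D (g - g₁))) :
    ∀ g, 1 ≤ g →
      Dstar g = D g * ((D 0)⁻¹) ^ 2 +
        ∑ j ∈ Finset.range (g - 1),
          (-1 : PowerSeries ℝ) ^ (g + 1 - j) * ((D 0)⁻¹) ^ (g + 1 - j) *
            ∑ σ ∈ comps g (g - j), ∏ i, D (σ i) := by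
  set I : PowerSeries ℝ := (D 0)⁻¹ with hI
  -- key claim
  have key : ∀ g, 1 ≤ g →
      Dstar g = ∑ k ∈ Finset.Icc 1 g, (-1 : PowerSeries ℝ)^(k+1) * I^(k+1) * Scomp D g k := by
    intro g
    induction g using Nat.strong_induction_on with
    | _ g ih =>
      intro hg
      rw [hDsg g hg, hDs0]
      have hterm : ∀ g₁ ∈ Finset.Icc 1 (g-1),
          Dstar g₁ * D (g - g₁)
            = ∑ k ∈ Finset.Icc 1 (g-1),
                (-1 : PowerSeries ℝ)^(k+1) * I^(k+1) * (Scomp D g₁ k * D (g - g₁)) := by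
        intro g₁ hg₁
        rw [Finset.mem_Icc] at hg₁
        rw [ih g₁ (by omega) hg₁.1]
        rw [Finset.sum_mul]
        rw [Finset.sum_subset (Finset.Icc_subset_Icc_right hg₁.2)]
        · exact Finset.sum_congr rfl fun k _ => by ring
        · intro k hk hk'
          rw [Finset.mem_Icc] at hk hk'
          rw [Scomp_zero D (show g₁ < k by omega)]
          ring
      rw [Finset.sum_congr rfl hterm, Finset.sum_comm]
      have hswap : ∀ k ∈ Finset.Icc 1 (g-1),
          ∑ g₁ ∈ Finset.Icc 1 (g-1),
              (-1 : PowerSeries ℝ)^(k+1) * I^(k+1) * (Scomp D g₁ k * D (g - g₁))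
            = (-1 : PowerSeries ℝ)^(k+1) * I^(k+1) * Scomp D g (k+1) := by
        intro k hk
        rw [Finset.mem_Icc] at hk
        rw [← Finset.mul_sum, Scomp_rec D g k hk.1]
      rw [Finset.sum_congr rfl hswap]
      have hmain : -I * ((1 - I - 1) * D g +
          ∑ k ∈ Finset.Icc 1 (g-1), (-1 : PowerSeries ℝ)^(k+1) * I^(k+1) * Scomp D g (k+1))
          = (-1 : PowerSeries ℝ)^(1+1) * I^(1+1) * Scomp D g 1 +
            ∑ k ∈ Finset.Icc 1 (g-1),
              (-1 : PowerSeries ℝ)^((k+1)+1) * I^((k+1)+1) * Scomp D g (k+1) := by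
        rw [mul_add, Finset.mul_sum, Scomp_one D hg]
        congr 1
        · ring
        · exact Finset.sum_congr rfl fun k _ => by ring
      rw [hmain]
      have hre : ∑ k ∈ Finset.Icc 1 (g-1),
            (-1 : PowerSeries ℝ)^((k+1)+1) * I^((k+1)+1) * Scomp D g (k+1)
          = ∑ k ∈ Finset.Icc 2 g, (-1 : PowerSeries ℝ)^(k+1) * I^(k+1) * Scomp D g k := by
        refine Finset.sum_nbij' (i := fun k => k + 1) (j := fun k => k - 1) ?_ ?_ ?_ ?_ ?_
        · intro k hk; simp only [Finset.mem_Icc] at *; omega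
        · intro k hk; simp only [Finset.mem_Icc] at *; omega
        · intro k hk; simp only [Finset.mem_Icc] at hk; omega
        · intro k hk; simp only [Finset.mem_Icc] at hk; omega
        · intro k hk; rfl
      rw [hre]
      have hIcc : Finset.Icc 1 g = insert 1 (Finset.Icc 2 g) := by
        ext x; simp only [Finset.mem_Icc, Finset.mem_insert]; omega
      rw [hIcc, Finset.sum_insert (by simp)]
  -- convert key to goal form
  intro g hg
  rw [key g hg]
  have hIcc : Finset.Icc 1 g = insert 1 (Finset.Icc 2 g) := by
    ext x; simp only [Finset.mem_Icc, Finset.mem_insert]; omega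
  rw [hIcc, Finset.sum_insert (by simp), Scomp_one D hg]
  congr 1
  · ring
  · refine (Finset.sum_nbij' (i := fun k => g - k) (j := fun j => g - j) ?_ ?_ ?_ ?_ ?_).symm
    · intro k hk; simp only [Finset.mem_Icc, Finset.mem_range] at *; omega
    · intro j hj; simp only [Finset.mem_Icc, Finset.mem_range] at *; omega
    · intro k hk; simp only [Finset.mem_range] at hk; omega
    · intro j hj; simp only [Finset.mem_Icc] at hj; omega
    · intro k hk
      simp only [Finset.mem_range] at hk
      have h1 : g + 1 - k = (g - k) + 1 := by omega
      rw [h1]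
      rfl
end

section
/- In ℝ⟦z⟧ let q := 1 − z + z², u := z²·q⁻², and let s be the unique formal power series with s² = 1 − 4u and constant term 1. Let P_g ∈ ℝ[X] for g ≥ 1 satisfy X^{2g} ∣ P_g. Define D_0 := 2·q⁻¹·(1 + s)⁻¹ and, for g ≥ 1, D_g := q⁻¹·P_g(u)·s·(1 − 4u)^{−3g} (so that D_g = q⁻¹·P_g(u)/(1 − 4u)^{3g − 1/2}), and define D*_g by the recursion D*_0 := 1 − D_0⁻¹ and D*_g := −D_0⁻¹·((D*_0 − 1)·D_g + Σ_{g₁=1}^{g−1} D*_{g₁}·D_{g−g₁}) for g ≥ 1. Then for every g ≥ 1 there exist polynomials U_g, V_g ∈ ℝ[X] such that: (i) X^{2g} ∣ U_g and X^{2g} ∣ V_g; (ii) D*_g = q·( U_g(u)·s·(1 − 4u)^{−3g} + V_g(u)·(1 − 4u)^{−(3g−1)} ); (iii) U_g(1/4) = P_g(1/4)/4; and (iv) V_g(1/4) = ( 4·P_g(1/4) − Σ_{j=1}^{g−1} P_j(1/4)·P_{g−j}(1/4) ) / 8. -/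
open Polynomial PowerSeries

noncomputable def UV (P : ℕ → Polynomial ℝ) : ℕ → Polynomial ℝ × Polynomial ℝ
  | g =>
    (Polynomial.C (1/2) * P g * (1 - 2 * Polynomial.X) -
       Polynomial.C (1/2) * (1 - 4 * Polynomial.X) *
         ∑ j ∈ (Finset.Icc 1 (g - 1)).attach, ((UV P j.1).1 + (UV P j.1).2) * P (g - j.1),
     Polynomial.C (1/2) * P g -
       Polynomial.C (1/2) *
         ∑ j ∈ (Finset.Icc 1 (g - 1)).attach,
           ((UV P j.1).1 + (UV P j.1).2 * (1 - 4 * Polynomial.X)) * P (g - j.1))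
  termination_by g => g
  decreasing_by all_goals (rcases Finset.mem_Icc.mp j.2 with ⟨h1, h2⟩; omega)

theorem UV_fst (P : ℕ → Polynomial ℝ) (g : ℕ) :
    (UV P g).1 = Polynomial.C (1/2) * P g * (1 - 2 * Polynomial.X) -
       Polynomial.C (1/2) * (1 - 4 * Polynomial.X) *
         ∑ j ∈ Finset.Icc 1 (g - 1), ((UV P j).1 + (UV P j).2) * P (g - j) := by
  rw [UV, Finset.sum_attach (Finset.Icc 1 (g-1)) (fun j => ((UV P j).1 + (UV P j).2) * P (g - j))]

theorem UV_snd (P : ℕ → Polynomial ℝ) (g : ℕ) :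
    (UV P g).2 = Polynomial.C (1/2) * P g -
       Polynomial.C (1/2) *
         ∑ j ∈ Finset.Icc 1 (g - 1),
           ((UV P j).1 + (UV P j).2 * (1 - 4 * Polynomial.X)) * P (g - j) := by
  rw [UV, Finset.sum_attach (Finset.Icc 1 (g-1))
    (fun j => ((UV P j).1 + (UV P j).2 * (1 - 4 * Polynomial.X)) * P (g - j))]

theorem UV_fst_eval (P : ℕ → Polynomial ℝ) (g : ℕ) :
    Polynomial.eval (1/4 : ℝ) (UV P g).1 = Polynomial.eval (1/4 : ℝ) (P g) / 4 := by
  rw [UV_fst]; simp; ring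

theorem UV_snd_eval (P : ℕ → Polynomial ℝ) (g : ℕ) :
    Polynomial.eval (1/4 : ℝ) (UV P g).2 =
      (4 * Polynomial.eval (1/4 : ℝ) (P g) -
        ∑ j ∈ Finset.Icc 1 (g - 1),
          Polynomial.eval (1/4 : ℝ) (P j) * Polynomial.eval (1/4 : ℝ) (P (g - j))) / 8 := by
  rw [UV_snd]
  simp only [eval_sub, eval_mul, eval_C, eval_add, eval_one, eval_ofNat, eval_X,
    Polynomial.eval_finset_sum]
  have h : ∀ j ∈ Finset.Icc 1 (g-1),
      (Polynomial.eval (1/4 : ℝ) (UV P j).1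
        + Polynomial.eval (1/4 : ℝ) (UV P j).2 * (1 - 4 * (1/4 : ℝ)))
        * Polynomial.eval (1/4 : ℝ) (P (g - j))
      = (Polynomial.eval (1/4 : ℝ) (P j) * Polynomial.eval (1/4 : ℝ) (P (g - j))) / 4 := by
    intro j _
    rw [UV_fst_eval]
    norm_num
    ring
  rw [Finset.sum_congr rfl h, ← Finset.sum_div]
  field_simp
  ring

theorem UV_dvd (P : ℕ → Polynomial ℝ) (hP : ∀ g, 1 ≤ g → (Polynomial.X : ℝ[X]) ^ (2*g) ∣ P g)
    (g : ℕ) (hg : 1 ≤ g) :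
    (Polynomial.X : ℝ[X]) ^ (2*g) ∣ (UV P g).1 ∧ (Polynomial.X : ℝ[X]) ^ (2*g) ∣ (UV P g).2 := by
  induction g using Nat.strong_induction_on with
  | _ g ih =>
    have hsum : ∀ Q : ℕ → ℝ[X], (∀ j ∈ Finset.Icc 1 (g-1), (Polynomial.X : ℝ[X]) ^ (2*j) ∣ Q j) →
        (Polynomial.X : ℝ[X]) ^ (2*g) ∣ ∑ j ∈ Finset.Icc 1 (g-1), Q j * P (g - j) := by
      intro Q hQ
      refine Finset.dvd_sum fun j hj => ?_
      obtain ⟨h1, h2⟩ := Finset.mem_Icc.mp hj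
      have : (Polynomial.X : ℝ[X]) ^ (2*g) = Polynomial.X ^ (2*j) * Polynomial.X ^ (2*(g-j)) := by
        rw [← pow_add]; congr 1; omega
      rw [this]
      exact mul_dvd_mul (hQ j hj) (hP (g - j) (by omega))
    constructor
    · rw [UV_fst]
      refine dvd_sub (((hP g hg).mul_left _).mul_right _) (Dvd.dvd.mul_left ?_ _)
      refine hsum _ fun j hj => ?_
      obtain ⟨h1, h2⟩ := Finset.mem_Icc.mp hj
      exact dvd_add (ih j (by omega) (by omega)).1 (ih j (by omega) (by omega)).2
    · rw [UV_snd]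
      refine dvd_sub ((hP g hg).mul_left _) (Dvd.dvd.mul_left ?_ _)
      refine hsum _ fun j hj => ?_
      obtain ⟨h1, h2⟩ := Finset.mem_Icc.mp hj
      exact dvd_add (ih j (by omega) (by omega)).1 ((ih j (by omega) (by omega)).2.mul_right _)

/-- Theorem T:irr (a), structural part: given the representation
`D_g = q⁻¹ · P_g(u) · s · (1-4u)^{-3g}` (i.e. `D_g = q⁻¹·P_g(u)/(1-4u)^{3g-1/2}`)
with `X^{2g} ∣ P_g`, the generating functions `D*_g` of irreducible genus-`g`
structures defined by the recursion of Lemma irr_rec have the form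
`q · ( U_g(u)·s·(1-4u)^{-3g} + V_g(u)·(1-4u)^{-(3g-1)} )` with `X^{2g} ∣ U_g`,
`X^{2g} ∣ V_g`, `U_g(1/4) = P_g(1/4)/4` and
`V_g(1/4) = (4·P_g(1/4) - ∑_{j=1}^{g-1} P_j(1/4)·P_{g-j}(1/4))/8`. -/
theorem stmt_3 (q u s : PowerSeries ℝ)
    (hq : q = 1 - PowerSeries.X + PowerSeries.X ^ 2)
    (hu : u = PowerSeries.X ^ 2 * (q⁻¹) ^ 2)
    (hs2 : s ^ 2 = 1 - 4 * u)
    (hs0 : PowerSeries.constantCoeff (R := ℝ) s = 1)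
    (P : ℕ → ℝ[X])
    (hP : ∀ g, 1 ≤ g → (Polynomial.X : ℝ[X]) ^ (2 * g) ∣ P g)
    (D : ℕ → PowerSeries ℝ)
    (hD0 : D 0 = 2 * q⁻¹ * (1 + s)⁻¹)
    (hDg : ∀ g, 1 ≤ g →
      D g = q⁻¹ * Polynomial.aeval u (P g) * s * ((1 - 4 * u)⁻¹) ^ (3 * g))
    (Dstar : ℕ → PowerSeries ℝ)
    (hDs0 : Dstar 0 = 1 - (D 0)⁻¹)
    (hDsg : ∀ g, 1 ≤ g →
      Dstar g = -(D 0)⁻¹ * ((Dstar 0 - 1) * D g +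
        ∑ g₁ ∈ Finset.Icc 1 (g - 1), Dstar g₁ * D (g - g₁))) :
    ∀ g, 1 ≤ g → ∃ U V : ℝ[X],
      (Polynomial.X : ℝ[X]) ^ (2 * g) ∣ U ∧
      (Polynomial.X : ℝ[X]) ^ (2 * g) ∣ V ∧
      Dstar g = q * (Polynomial.aeval u U * s * ((1 - 4 * u)⁻¹) ^ (3 * g) +
        Polynomial.aeval u V * ((1 - 4 * u)⁻¹) ^ (3 * g - 1)) ∧
      Polynomial.eval (1 / 4 : ℝ) U = Polynomial.eval (1 / 4 : ℝ) (P g) / 4 ∧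
      Polynomial.eval (1 / 4 : ℝ) V =
        (4 * Polynomial.eval (1 / 4 : ℝ) (P g) -
          ∑ j ∈ Finset.Icc 1 (g - 1),
            Polynomial.eval (1 / 4 : ℝ) (P j) *
              Polynomial.eval (1 / 4 : ℝ) (P (g - j))) / 8 := by
  -- preliminaries
  have hqc : PowerSeries.constantCoeff (R := ℝ) q = 1 := by rw [hq]; simp
  have hqq : q * q⁻¹ = 1 := PowerSeries.mul_inv_cancel q (by rw [hqc]; norm_num)
  have huc : PowerSeries.constantCoeff (R := ℝ) u = 0 := by rw [hu]; simp
  have hwc : PowerSeries.constantCoeff (R := ℝ) (1 - 4 * u) = 1 := by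
    simp [huc]
  have hw : (1 - 4 * u) * (1 - 4 * u)⁻¹ = 1 :=
    PowerSeries.mul_inv_cancel _ (by rw [hwc]; norm_num)
  have hsc : PowerSeries.constantCoeff (R := ℝ) (1 + s) = 2 := by simp [hs0]; norm_num
  have hss : (1 + s) * (1 + s)⁻¹ = 1 :=
    PowerSeries.mul_inv_cancel _ (by rw [hsc]; norm_num)
  have h2 : algebraMap ℝ (PowerSeries ℝ) (1/2) * 2 = 1 := by
    rw [← map_ofNat (algebraMap ℝ (PowerSeries ℝ)) 2, ← map_mul]
    norm_num
  have hD0c : PowerSeries.constantCoeff (R := ℝ) (D 0) = 1 := by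
    rw [hD0]
    simp [PowerSeries.constantCoeff_inv, hqc, hsc, map_ofNat]
  have hinv : (D 0)⁻¹ = algebraMap ℝ (PowerSeries ℝ) (1/2) * (q * (1 + s)) := by
    symm
    rw [PowerSeries.eq_inv_iff_mul_eq_one (by rw [hD0c]; norm_num), hD0]
    calc algebraMap ℝ (PowerSeries ℝ) (1/2) * (q * (1 + s)) * (2 * q⁻¹ * (1 + s)⁻¹)
        = (algebraMap ℝ (PowerSeries ℝ) (1/2) * 2) * ((q * q⁻¹) * ((1 + s) * (1 + s)⁻¹)) := by
          ring
      _ = 1 := by rw [h2, hqq, hss]; ring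
  -- the main identity
  have main : ∀ g, 1 ≤ g → Dstar g =
      q * (Polynomial.aeval u (UV P g).1 * s * ((1 - 4 * u)⁻¹) ^ (3 * g) +
        Polynomial.aeval u (UV P g).2 * ((1 - 4 * u)⁻¹) ^ (3 * g - 1)) := by
    intro g
    induction g using Nat.strong_induction_on with
    | _ g ih =>
      intro hg
      have hAU : Polynomial.aeval u (UV P g).1 =
          algebraMap ℝ (PowerSeries ℝ) (1/2) * Polynomial.aeval u (P g) * (1 - 2 * u)
          - algebraMap ℝ (PowerSeries ℝ) (1/2) * (1 - 4 * u) *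
            ∑ j ∈ Finset.Icc 1 (g - 1),
              (Polynomial.aeval u (UV P j).1 + Polynomial.aeval u (UV P j).2) *
                Polynomial.aeval u (P (g - j)) := by
        rw [UV_fst]
        simp only [map_sub, map_mul, map_add, map_one, map_ofNat, Polynomial.aeval_X,
          Polynomial.aeval_C, map_sum]
      have hAV : Polynomial.aeval u (UV P g).2 =
          algebraMap ℝ (PowerSeries ℝ) (1/2) * Polynomial.aeval u (P g)
          - algebraMap ℝ (PowerSeries ℝ) (1/2) *
            ∑ j ∈ Finset.Icc 1 (g - 1),
              (Polynomial.aeval u (UV P j).1 +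
                Polynomial.aeval u (UV P j).2 * (1 - 4 * u)) *
                Polynomial.aeval u (P (g - j)) := by
        rw [UV_snd]
        simp only [map_sub, map_mul, map_add, map_one, map_ofNat, Polynomial.aeval_X,
          Polynomial.aeval_C, map_sum]
      have h3g : ((1 - 4 * u)⁻¹ : PowerSeries ℝ) ^ (3 * g) =
          ((1 - 4 * u)⁻¹) ^ (3 * g - 1) * (1 - 4 * u)⁻¹ := by
        rw [← pow_succ]; congr 1; omega
      -- per-term claim for the sum
      have claim : ∀ j ∈ Finset.Icc 1 (g - 1),
          (algebraMap ℝ (PowerSeries ℝ) (1/2) * (q * (1 + s))) * (Dstar j * D (g - j)) =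
          q * ((algebraMap ℝ (PowerSeries ℝ) (1/2) * (1 - 4 * u) *
                ((Polynomial.aeval u (UV P j).1 + Polynomial.aeval u (UV P j).2) *
                  Polynomial.aeval u (P (g - j)))) * s * ((1 - 4 * u)⁻¹) ^ (3 * g) +
              (algebraMap ℝ (PowerSeries ℝ) (1/2) *
                ((Polynomial.aeval u (UV P j).1 +
                  Polynomial.aeval u (UV P j).2 * (1 - 4 * u)) *
                  Polynomial.aeval u (P (g - j)))) * ((1 - 4 * u)⁻¹) ^ (3 * g - 1)) := by
        intro j hj
        obtain ⟨hj1, hj2⟩ := Finset.mem_Icc.mp hj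
        rw [ih j (by omega) (by omega), hDg (g - j) (by omega)]
        have e1 : ((1 - 4 * u)⁻¹ : PowerSeries ℝ) ^ (3 * j) * ((1 - 4 * u)⁻¹) ^ (3 * (g - j)) =
            ((1 - 4 * u)⁻¹) ^ (3 * g - 1) * (1 - 4 * u)⁻¹ := by
          rw [← pow_add, ← pow_succ]; congr 1; omega
        have e2 : ((1 - 4 * u)⁻¹ : PowerSeries ℝ) ^ (3 * j - 1) * ((1 - 4 * u)⁻¹) ^ (3 * (g - j)) =
            ((1 - 4 * u)⁻¹) ^ (3 * g - 1) := by
          rw [← pow_add]; congr 1; omega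
        set c := algebraMap ℝ (PowerSeries ℝ) (1/2)
        set a := Polynomial.aeval u (UV P j).1
        set b := Polynomial.aeval u (UV P j).2
        set p := Polynomial.aeval u (P (g - j))
        set W := ((1 - 4 * u)⁻¹ : PowerSeries ℝ)
        calc c * (q * (1 + s)) *
            (q * (a * s * W ^ (3 * j) + b * W ^ (3 * j - 1)) *
              (q⁻¹ * p * s * W ^ (3 * (g - j))))
            = c * (q * q⁻¹) * q * ((1 + s) * (p *
                (a * s ^ 2 * (W ^ (3 * j) * W ^ (3 * (g - j))) +
                 b * s * (W ^ (3 * j - 1) * W ^ (3 * (g - j)))))) := by ring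
          _ = c * q * ((1 + s) * (p *
                (a * (((1 - 4 * u) * W) * W ^ (3 * g - 1)) +
                 b * s * W ^ (3 * g - 1)))) := by rw [hqq, hs2, e1, e2]; ring
          _ = c * q * (p *
                (a * W ^ (3 * g - 1) + b * s * W ^ (3 * g - 1) + a * s * W ^ (3 * g - 1) +
                  b * s ^ 2 * W ^ (3 * g - 1))) := by rw [hw]; ring
          _ = q * ((c * (1 - 4 * u) * ((a + b) * p)) * s * W ^ (3 * g) +
                (c * ((a + b * (1 - 4 * u)) * p)) * W ^ (3 * g - 1)) := by
              rw [hs2, h3g]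
              linear_combination (-(c * q * p * ((a + b) * s * W ^ (3 * g - 1)))) * hw
      -- sum version
      have hsum : (algebraMap ℝ (PowerSeries ℝ) (1/2) * (q * (1 + s))) *
          ∑ j ∈ Finset.Icc 1 (g - 1), Dstar j * D (g - j) =
          q * ((algebraMap ℝ (PowerSeries ℝ) (1/2) * (1 - 4 * u) *
                ∑ j ∈ Finset.Icc 1 (g - 1),
                  (Polynomial.aeval u (UV P j).1 + Polynomial.aeval u (UV P j).2) *
                    Polynomial.aeval u (P (g - j))) * s * ((1 - 4 * u)⁻¹) ^ (3 * g) +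
              (algebraMap ℝ (PowerSeries ℝ) (1/2) *
                ∑ j ∈ Finset.Icc 1 (g - 1),
                  (Polynomial.aeval u (UV P j).1 +
                    Polynomial.aeval u (UV P j).2 * (1 - 4 * u)) *
                    Polynomial.aeval u (P (g - j))) * ((1 - 4 * u)⁻¹) ^ (3 * g - 1)) := by
        rw [Finset.mul_sum, Finset.sum_congr rfl claim, Finset.mul_sum, Finset.mul_sum,
          Finset.sum_mul, Finset.sum_mul, Finset.sum_mul,
          ← Finset.sum_add_distrib, Finset.mul_sum]
      -- assemble
      rw [hDsg g hg, hDs0, hinv, hDg g hg, hAU, hAV]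
      set c := algebraMap ℝ (PowerSeries ℝ) (1/2)
      set Pg := Polynomial.aeval u (P g)
      set W := ((1 - 4 * u)⁻¹ : PowerSeries ℝ)
      linear_combination (-1 : PowerSeries ℝ) * hsum
        + (c^2 * (1+s)^2 * Pg * s * W ^ (3*g) * q) * hqq
        + (c^2 * q * Pg * W ^ (3*g) * (2 + s)) * hs2
        + (q * Pg * s * W ^ (3*g) * (1 - 2*u) * c + c * q * Pg * W ^ (3*g-1)) * h2
        + (2 * c^2 * q * Pg * W ^ (3*g-1)) * hw
        + (2 * c^2 * q * Pg * (1 - 4*u)) * h3g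
  -- conclude
  intro g hg
  exact ⟨(UV P g).1, (UV P g).2, (UV_dvd P hP g hg).1, (UV_dvd P hP g hg).2,
    main g hg, UV_fst_eval P g, UV_snd_eval P g⟩
end

section
/- Let W ∈ ℝ⟦z⟧ be the unique formal power series with constant term 0 satisfying W = (6/16)·e^{1/2}·z³·(1 − z)⁻¹ + (6/16)·e·z²·(1 − z)⁻²·W + (6/16)·e^{−5}·z²·( W·(1 − z)⁻¹ )²·( 1 − W·(1 − z)⁻¹ )⁻¹·(1 − z)⁻¹, and let F := (1 − z)⁻¹·( 1 − W·(1 − z)⁻¹ )⁻¹ ∈ ℝ⟦z⟧. Write w(n) and f(n) for the coefficients of z^n in W and F. Then w(0) = w(1) = w(2) = 0, w(n) > 0 for every n ≥ 3, and f(n) ≥ 1 for every n ≥ 0. -/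
open PowerSeries

private lemma nn_mul {n : ℕ} {p q : PowerSeries ℝ}
    (hp : ∀ i, i ≤ n → 0 ≤ PowerSeries.coeff i p)
    (hq : ∀ i, i ≤ n → 0 ≤ PowerSeries.coeff i q) :
    ∀ i, i ≤ n → 0 ≤ PowerSeries.coeff i (p * q) := by
  intro i hi
  rw [PowerSeries.coeff_mul]
  refine Finset.sum_nonneg fun x hx => ?_
  rw [Finset.HasAntidiagonal.mem_antidiagonal] at hx
  exact mul_nonneg (hp x.1 (by omega)) (hq x.2 (by omega))

private lemma inv_one_sub_X_eq : (1 - PowerSeries.X : PowerSeries ℝ)⁻¹ =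
    PowerSeries.mk fun _ => (1 : ℝ) := by
  symm
  rw [PowerSeries.eq_inv_iff_mul_eq_one (by simp)]
  ext n
  cases n with
  | zero => simp
  | succ m =>
      simp [mul_sub, PowerSeries.coeff_succ_mul_X, PowerSeries.coeff_one]

/-- Coefficient positivity (proof of Lemma eumel33): for the energy-weighted
generating function `W = F*_0(z)` of irreducible secondary structures and
`F = F_0(z) = (1-z)⁻¹(1 - W(1-z)⁻¹)⁻¹`, one has `w(0) = w(1) = w(2) = 0`,
`w(n) > 0` for `n ≥ 3`, and `f(n) ≥ 1` for all `n`. -/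
theorem stmt_6 (W F : PowerSeries ℝ)
    (hW0 : PowerSeries.constantCoeff W = 0)
    (hWeq : W = PowerSeries.C (6 / 16 * Real.exp (1 / 2)) * PowerSeries.X ^ 3 *
            (1 - PowerSeries.X)⁻¹
        + PowerSeries.C (6 / 16 * Real.exp 1) * PowerSeries.X ^ 2 *
            ((1 - PowerSeries.X)⁻¹) ^ 2 * W
        + PowerSeries.C (6 / 16 * Real.exp (-5)) * PowerSeries.X ^ 2 *
            (W * (1 - PowerSeries.X)⁻¹) ^ 2 *
            (1 - W * (1 - PowerSeries.X)⁻¹)⁻¹ * (1 - PowerSeries.X)⁻¹)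
    (hF : F = (1 - PowerSeries.X)⁻¹ * (1 - W * (1 - PowerSeries.X)⁻¹)⁻¹) :
    PowerSeries.coeff 0 W = 0 ∧
    PowerSeries.coeff 1 W = 0 ∧
    PowerSeries.coeff 2 W = 0 ∧
    (∀ n, 3 ≤ n → 0 < PowerSeries.coeff n W) ∧
    (∀ n, 1 ≤ PowerSeries.coeff n F) := by
  set c1 : ℝ := 6 / 16 * Real.exp (1 / 2) with hc1def
  set c2 : ℝ := 6 / 16 * Real.exp 1 with hc2def
  set c3 : ℝ := 6 / 16 * Real.exp (-5) with hc3def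
  have hc1 : 0 < c1 := by positivity
  have hc2 : 0 < c2 := by positivity
  have hc3 : 0 < c3 := by positivity
  set A : PowerSeries ℝ := (1 - PowerSeries.X)⁻¹ with hAdef
  set G : PowerSeries ℝ := (1 - W * A)⁻¹ with hGdef
  have hAco : ∀ n, PowerSeries.coeff n A = 1 := by
    intro n; rw [hAdef, inv_one_sub_X_eq]; simp
  have hnnA : ∀ n, ∀ i, i ≤ n → 0 ≤ PowerSeries.coeff i A := by
    intro n i _; rw [hAco]; norm_num
  have hcc : PowerSeries.constantCoeff (1 - W * A) = 1 := by
    have : PowerSeries.constantCoeff A = 1 := by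
      rw [← PowerSeries.coeff_zero_eq_constantCoeff]; exact hAco 0
    simp [map_sub, map_mul, hW0, this]
  have hGmul : (1 - W * A) * G = 1 :=
    PowerSeries.mul_inv_cancel _ (by rw [hcc]; norm_num)
  have hG : G = 1 + W * A * G := by linear_combination hGmul
  have hg0 : PowerSeries.coeff 0 G = 1 := by
    rw [PowerSeries.coeff_zero_eq_constantCoeff]
    conv_lhs => rw [hG]
    simp [map_add, map_mul, hW0]
  -- the shifted form of the fixed-point equation
  set Q : PowerSeries ℝ := PowerSeries.C c1 * PowerSeries.X * A
      + PowerSeries.C c2 * A ^ 2 * W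
      + PowerSeries.C c3 * (W * A) ^ 2 * G * A with hQdef
  have hW2 : W = PowerSeries.X ^ 2 * Q := by
    rw [hWeq, hQdef]; ring
  -- nonnegativity of coefficients of C c
  have hnnC : ∀ (c : ℝ), 0 ≤ c → ∀ (n : ℕ), ∀ i, i ≤ n →
      0 ≤ PowerSeries.coeff i (PowerSeries.C c) := by
    intro c hc n i _
    rw [PowerSeries.coeff_C]
    split <;> simp [hc]
  -- main induction: all coefficients of W and G are nonnegative
  have key : ∀ n : ℕ, 0 ≤ PowerSeries.coeff n W ∧ 0 ≤ PowerSeries.coeff n G := by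
    intro n
    induction n using Nat.strong_induction_on with
    | _ n ih =>
      have ihW : ∀ m, m < n → 0 ≤ PowerSeries.coeff m W := fun m hm => (ih m hm).1
      have ihG : ∀ m, m < n → 0 ≤ PowerSeries.coeff m G := fun m hm => (ih m hm).2
      have hWn : 0 ≤ PowerSeries.coeff n W := by
        rw [hW2, PowerSeries.coeff_X_pow_mul']
        split
        · -- coeff (n-2) Q ≥ 0
          have hb : n - 2 < n := by omega
          have hWb : ∀ i, i ≤ n - 2 → 0 ≤ PowerSeries.coeff i W :=
            fun i hi => ihW i (by omega)
          have hGb : ∀ i, i ≤ n - 2 → 0 ≤ PowerSeries.coeff i G :=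
            fun i hi => ihG i (by omega)
          have hXb : ∀ i, i ≤ n - 2 → 0 ≤ PowerSeries.coeff i (PowerSeries.X : PowerSeries ℝ) := by
            intro i _; rw [PowerSeries.coeff_X]; split <;> norm_num
          have hA2 : ∀ i, i ≤ n - 2 → 0 ≤ PowerSeries.coeff i (A ^ 2) := by
            rw [sq]; exact nn_mul (hnnA _) (hnnA _)
          have hWA2 : ∀ i, i ≤ n - 2 → 0 ≤ PowerSeries.coeff i ((W * A) ^ 2) := by
            rw [sq]; exact nn_mul (nn_mul hWb (hnnA _)) (nn_mul hWb (hnnA _))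
          rw [hQdef]
          rw [map_add, map_add]
          refine add_nonneg (add_nonneg ?_ ?_) ?_
          · exact nn_mul (nn_mul (hnnC c1 hc1.le _) hXb) (hnnA _) _ le_rfl
          · exact nn_mul (nn_mul (hnnC c2 hc2.le _) hA2) hWb _ le_rfl
          · exact nn_mul (nn_mul (nn_mul (hnnC c3 hc3.le _) hWA2) hGb) (hnnA _) _ le_rfl
        · exact le_rfl
      refine ⟨hWn, ?_⟩
      have hWle : ∀ i, i ≤ n → 0 ≤ PowerSeries.coeff i W := by
        intro i hi
        rcases eq_or_lt_of_le hi with h | h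
        · exact h ▸ hWn
        · exact ihW i h
      conv_rhs => rw [hG]
      rw [map_add]
      refine add_nonneg ?_ ?_
      · rw [PowerSeries.coeff_one]; split <;> norm_num
      · rw [mul_assoc, PowerSeries.coeff_mul]
        refine Finset.sum_nonneg fun x hx => ?_
        rw [Finset.HasAntidiagonal.mem_antidiagonal] at hx
        rcases Nat.eq_zero_or_pos x.1 with h0 | h0
        · have : PowerSeries.coeff x.1 W = 0 := by
            rw [h0, PowerSeries.coeff_zero_eq_constantCoeff, hW0]
          rw [this, zero_mul]
        · have hx2 : x.2 < n := by omega
          refine mul_nonneg (hWle x.1 (by omega)) ?_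
          exact nn_mul (hnnA x.2) (fun i hi => ihG i (lt_of_le_of_lt hi hx2)) x.2 le_rfl
  have wnn : ∀ n, 0 ≤ PowerSeries.coeff n W := fun n => (key n).1
  have gnn : ∀ n, 0 ≤ PowerSeries.coeff n G := fun n => (key n).2
  have w0 : PowerSeries.coeff 0 W = 0 := by
    rw [PowerSeries.coeff_zero_eq_constantCoeff]; exact hW0
  have w1 : PowerSeries.coeff 1 W = 0 := by
    rw [hW2, PowerSeries.coeff_X_pow_mul']; norm_num
  have w2 : PowerSeries.coeff 2 W = 0 := by
    rw [hW2, PowerSeries.coeff_X_pow_mul']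
    norm_num
    rw [hQdef]
    simp [map_add, map_mul, map_pow, hW0]
  refine ⟨w0, w1, w2, ?_, ?_⟩
  · intro n hn
    conv_rhs => rw [hWeq]
    rw [map_add, map_add]
    have ht1 : PowerSeries.coeff n (PowerSeries.C c1 * PowerSeries.X ^ 3 * A) = c1 := by
      rw [mul_assoc, PowerSeries.coeff_C_mul, PowerSeries.coeff_X_pow_mul', if_pos hn,
        hAco, mul_one]
    have ht2 : 0 ≤ PowerSeries.coeff n (PowerSeries.C c2 * PowerSeries.X ^ 2 * A ^ 2 * W) := by
      have hX2 : ∀ i, i ≤ n → 0 ≤ PowerSeries.coeff i ((PowerSeries.X : PowerSeries ℝ) ^ 2) := by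
        intro i _; rw [PowerSeries.coeff_X_pow]; split <;> norm_num
      have hA2 : ∀ i, i ≤ n → 0 ≤ PowerSeries.coeff i (A ^ 2) := by
        rw [sq]; exact nn_mul (hnnA _) (hnnA _)
      exact nn_mul (nn_mul (nn_mul (hnnC c2 hc2.le _) hX2) hA2) (fun i _ => wnn i) n le_rfl
    have ht3 : 0 ≤ PowerSeries.coeff n
        (PowerSeries.C c3 * PowerSeries.X ^ 2 * (W * A) ^ 2 * G * A) := by
      have hX2 : ∀ i, i ≤ n → 0 ≤ PowerSeries.coeff i ((PowerSeries.X : PowerSeries ℝ) ^ 2) := by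
        intro i _; rw [PowerSeries.coeff_X_pow]; split <;> norm_num
      have hWA2 : ∀ i, i ≤ n → 0 ≤ PowerSeries.coeff i ((W * A) ^ 2) := by
        rw [sq]
        exact nn_mul (nn_mul (fun i _ => wnn i) (hnnA _)) (nn_mul (fun i _ => wnn i) (hnnA _))
      exact nn_mul (nn_mul (nn_mul (nn_mul (hnnC c3 hc3.le _) hX2) hWA2)
        (fun i _ => gnn i)) (hnnA _) n le_rfl
    rw [ht1]
    have := add_nonneg ht2 ht3
    linarith
  · intro n
    rw [hF]
    rw [PowerSeries.coeff_mul]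
    have hmem : ((n, 0) : ℕ × ℕ) ∈ Finset.HasAntidiagonal.antidiagonal n := by simp
    have hval : PowerSeries.coeff n A * PowerSeries.coeff 0 G = 1 := by
      rw [hAco, hg0, mul_one]
    calc (1 : ℝ) = PowerSeries.coeff n A * PowerSeries.coeff 0 G := hval.symm
      _ ≤ ∑ x ∈ Finset.HasAntidiagonal.antidiagonal n, PowerSeries.coeff x.1 A * PowerSeries.coeff x.2 G := by
          refine Finset.single_le_sum (f := fun x : ℕ × ℕ =>
            PowerSeries.coeff x.1 A * PowerSeries.coeff x.2 G) ?_ hmem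
          intro x _
          exact mul_nonneg (hnnA x.1 x.1 le_rfl) (gnn x.2)
end
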